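/- For r(ρ) = ρ − b²/(4(ρ − b)) with b > 0, the function φ(ρ) = 3π/2 − 4 arctan((√2+1)·sqrt((2ρ − (√2+1)b)/(2ρ + (√2−1)b))) satisfies φ'(ρ) = −sqrt(−2 r''(ρ)/r(ρ)) on (c,∞), where c = (√2+1)b/2 is the unique zero of r in (b,∞), and φ(ρ) → 0 as ρ → ∞. -/

import Mathlib

open Filter

/-- For `r(ρ) = ρ − b²/(4(ρ−b))` with `b > 0` and center `c = (√2+1)b/2`
(the unique zero of `r` in `(b,∞)`), the scalar field
`φ(ρ) = 3π/2 − 4 arctan((√2+1)√((2ρ−(√2+1)b)/(2ρ+(√2−1)b)))`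
satisfies `φ' = −√(−2r''/r)` on `(c,∞)` (with `r'' = −b²/(2(ρ−b)³)`) and `φ → 0`
at infinity. -/
theorem stmt19 (b c : ℝ) (hb : 0 < b) (hcb : c = (Real.sqrt 2 + 1) * b / 2)
    (r φ : ℝ → ℝ)
    (hr : ∀ ρ : ℝ, r ρ = ρ - b ^ 2 / (4 * (ρ - b)))
    (hφ : ∀ ρ : ℝ, φ ρ = 3 * Real.pi / 2 - 4 * Real.arctan ((Real.sqrt 2 + 1) *
      Real.sqrt ((2 * ρ - (Real.sqrt 2 + 1) * b) / (2 * ρ + (Real.sqrt 2 - 1) * b)))) :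
    r c = 0 ∧ (∀ ρ ∈ Set.Ioi c, 0 < r ρ) ∧
    (∀ ρ ∈ Set.Ioi c,
      HasDerivAt φ (-Real.sqrt (-2 * (-(b ^ 2 / (2 * (ρ - b) ^ 3))) / r ρ)) ρ) ∧
    Tendsto φ atTop (nhds 0) := by
  have hs0 : (0:ℝ) ≤ Real.sqrt 2 := Real.sqrt_nonneg 2
  have hs : Real.sqrt 2 ^ 2 = 2 := Real.sq_sqrt (by norm_num)
  set s := Real.sqrt 2 with hsdef
  have hs1 : 1 < s := by nlinarith
  have hcbb : b < c := by rw [hcb]; nlinarith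
  -- basic facts for ρ > c
  have hAB : ∀ ρ ∈ Set.Ioi c, 0 < 2*ρ - (s+1)*b ∧ 0 < 2*ρ + (s-1)*b ∧ b < ρ := by
    intro ρ hρ
    simp only [Set.mem_Ioi] at hρ
    rw [hcb] at hρ
    refine ⟨by nlinarith, by nlinarith, by nlinarith⟩
  have hrAB : ∀ ρ ∈ Set.Ioi c,
      r ρ = (2*ρ - (s+1)*b) * (2*ρ + (s-1)*b) / (4*(ρ - b)) := by
    intro ρ hρ
    obtain ⟨hA, hB, hbρ⟩ := hAB ρ hρ
    have h1 : ρ - b ≠ 0 := by linarith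
    rw [hr]
    have h2 : ρ - b^2/(4*(ρ-b)) = (4*ρ*(ρ-b) - b^2)/(4*(ρ-b)) := by
      field_simp
    rw [h2]
    congr 1
    linear_combination b^2*hs
  have hrpos : ∀ ρ ∈ Set.Ioi c, 0 < r ρ := by
    intro ρ hρ
    obtain ⟨hA, hB, hbρ⟩ := hAB ρ hρ
    rw [hrAB ρ hρ]
    exact div_pos (mul_pos hA hB) (by linarith)
  refine ⟨?_, hrpos, ?_, ?_⟩
  · have h0 : 0 < (s+1)*b/2 - b := by nlinarith [mul_pos (sub_pos.mpr hs1) hb]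
    have hz : (4*((s+1)*b/2 - b)) ≠ 0 := by positivity
    rw [hr, hcb, sub_eq_zero, eq_comm, div_eq_iff hz]
    linear_combination (-b^2) * hs
  · intro ρ hρ
    obtain ⟨hA, hB, hbρ⟩ := hAB ρ hρ
    set A := 2*ρ - (s+1)*b with hAdef
    set B := 2*ρ + (s-1)*b with hBdef
    have hBne : B ≠ 0 := ne_of_gt hB
    have hu : 0 < A / B := div_pos hA hB
    have f1 : HasDerivAt (fun x => (2*x - (s+1)*b)/(2*x + (s-1)*b))
        ((2*B - A*2)/B^2) ρ := by
      have hn : HasDerivAt (fun x : ℝ => 2*x - (s+1)*b) 2 ρ := by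
        simpa using ((hasDerivAt_id ρ).const_mul 2).sub_const ((s+1)*b)
      have hd : HasDerivAt (fun x : ℝ => 2*x + (s-1)*b) 2 ρ := by
        simpa using ((hasDerivAt_id ρ).const_mul 2).add_const ((s-1)*b)
      exact hn.div hd hBne
    have f2 : HasDerivAt (fun x => Real.sqrt ((2*x - (s+1)*b)/(2*x + (s-1)*b)))
        (1/(2*Real.sqrt (A/B)) * ((2*B - A*2)/B^2)) ρ := by
      exact (Real.hasDerivAt_sqrt (ne_of_gt hu)).comp ρ f1
    have f3 : HasDerivAt (fun x => Real.arctan ((s+1) *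
        Real.sqrt ((2*x - (s+1)*b)/(2*x + (s-1)*b))))
        (1/(1+((s+1)*Real.sqrt (A/B))^2) *
          ((s+1) * (1/(2*Real.sqrt (A/B)) * ((2*B - A*2)/B^2)))) ρ := by
      exact (Real.hasDerivAt_arctan _).comp ρ (f2.const_mul (s+1))
    have f5 : HasDerivAt φ
        (-(4 * (1/(1+((s+1)*Real.sqrt (A/B))^2) *
          ((s+1) * (1/(2*Real.sqrt (A/B)) * ((2*B - A*2)/B^2)))))) ρ := by
      have hφe : φ = fun x => 3 * Real.pi / 2 - 4 * Real.arctan ((s + 1) *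
          Real.sqrt ((2 * x - (s + 1) * b) / (2 * x + (s - 1) * b))) := funext hφ
      rw [hφe]
      simpa using (f3.const_mul 4).const_sub (3 * Real.pi / 2)
    convert f5 using 1
    -- equality of derivative values
    have hsa := Real.sq_sqrt hA.le
    have hsb := Real.sq_sqrt hB.le
    have hsa0 : 0 < Real.sqrt A := Real.sqrt_pos.mpr hA
    have hsb0 : 0 < Real.sqrt B := Real.sqrt_pos.mpr hB
    have hdiv : Real.sqrt (A/B) = Real.sqrt A / Real.sqrt B := Real.sqrt_div hA.le B
    have hρb : (0:ℝ) < ρ - b := by linarith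
    have key1 : -2 * (-(b ^ 2 / (2 * (ρ - b) ^ 3))) / r ρ
        = (2*b/((ρ-b)*Real.sqrt A*Real.sqrt B))^2 := by
      rw [hrAB ρ hρ]
      simp only [div_pow, mul_pow, hsa, hsb]
      have hz1 : (2*ρ - (s+1)*b) ≠ 0 := ne_of_gt hA
      have hz2 : (2*ρ + (s-1)*b) ≠ 0 := ne_of_gt hB
      have hz3 : ρ - b ≠ 0 := ne_of_gt hρb
      field_simp
      have hX : (2 * ρ - b * (s + 1)) * (2 * ρ + b * (s - 1)) = A * B := by rw [hAdef, hBdef]; ring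
      rw [hX, mul_assoc, mul_div_assoc, div_self (mul_pos hA hB).ne']
      norm_num
    rw [key1, Real.sqrt_sq (by positivity)]
    rw [hdiv]
    have hden : (1 + ((s + 1) * (Real.sqrt A / Real.sqrt B)) ^ 2) ≠ 0 := by positivity
    field_simp
    have hX : B + A*(s+1)^2 = 4*(s+2)*(ρ-b) := by
      rw [hAdef, hBdef]; linear_combination (2*ρ - b*(s+3)) * hs
    have hY : B - A = 2*s*b := by rw [hAdef, hBdef]; ring
    linear_combination (-2*b*B^2 + 4*(ρ-b)*(s+1)*(B-A)*(Real.sqrt B^2+B)) * hsb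
      + (-2*b*B^2*(s+1)^2) * hsa
      + (-2*b*B^2) * hX + (4*(ρ-b)*B^2*(s+1)) * hY + (8*b*(ρ-b)*B^2) * hs
  · -- Tendsto φ atTop (nhds 0)
    have h2lt : s < 2 := by nlinarith
    have h2s : (0:ℝ) < 2 - s := by linarith
    have key : Real.sqrt (2 + Real.sqrt 2) = (s+1) * Real.sqrt (2 - Real.sqrt 2) := by
      rw [show (2 + Real.sqrt 2) = (s+1)^2*(2 - Real.sqrt 2) by rw [← hsdef]; nlinarith,
        Real.sqrt_mul (sq_nonneg _), Real.sqrt_sq (by positivity)]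
    have ht : Real.tan (3*Real.pi/8) = s + 1 := by
      rw [show 3*Real.pi/8 = Real.pi/2 - Real.pi/8 by ring, Real.tan_pi_div_two_sub,
        Real.tan_eq_sin_div_cos, Real.sin_pi_div_eight, Real.cos_pi_div_eight, key]
      have hne : Real.sqrt (2 - Real.sqrt 2) ≠ 0 := by
        rw [← hsdef]; positivity
      field_simp
    have harct : Real.arctan (s+1) = 3*Real.pi/8 := by
      rw [← ht, Real.arctan_tan (by linarith [Real.pi_pos]) (by linarith [Real.pi_pos])]
    have hBtop : Tendsto (fun ρ:ℝ => 2*ρ + (s-1)*b) atTop atTop := by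
      apply tendsto_atTop_add_const_right
      exact (tendsto_id.const_mul_atTop (by norm_num : (0:ℝ) < 2))
    have h0 : Tendsto (fun ρ:ℝ => 2*s*b * (2*ρ + (s-1)*b)⁻¹) atTop (nhds 0) := by
      simpa using hBtop.inv_tendsto_atTop.const_mul (2*s*b)
    have hu1 : Tendsto (fun ρ:ℝ => (2*ρ-(s+1)*b)/(2*ρ+(s-1)*b)) atTop (nhds 1) := by
      have h1 : Tendsto (fun ρ:ℝ => 1 - 2*s*b * (2*ρ + (s-1)*b)⁻¹) atTop (nhds 1) := by
        simpa using (tendsto_const_nhds (α := ℝ) (x := (1:ℝ)) (f := atTop)).sub h0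
      refine h1.congr' ?_
      filter_upwards [eventually_gt_atTop c] with ρ hρ
      obtain ⟨hA, hB, hbρ⟩ := hAB ρ hρ
      rw [eq_div_iff hB.ne']
      linear_combination (-2*s*b) * inv_mul_cancel₀ hB.ne'
    have hsq : Tendsto (fun ρ:ℝ => Real.sqrt ((2*ρ-(s+1)*b)/(2*ρ+(s-1)*b))) atTop (nhds 1) := by
      have := (Real.continuous_sqrt.tendsto 1).comp hu1
      simpa [Real.sqrt_one, Function.comp_def] using this
    have harc : Tendsto (fun ρ:ℝ => Real.arctan ((s+1) *
        Real.sqrt ((2*ρ-(s+1)*b)/(2*ρ+(s-1)*b)))) atTop (nhds (Real.arctan (s+1))) := by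
      have := (Real.continuous_arctan.tendsto ((s+1)*1)).comp (hsq.const_mul (s+1))
      simpa [Function.comp_def] using this
    have hφe : φ = fun ρ => 3 * Real.pi / 2 - 4 * Real.arctan ((s + 1) *
        Real.sqrt ((2 * ρ - (s + 1) * b) / (2 * ρ + (s - 1) * b))) := funext hφ
    rw [hφe]
    have hfinal := (tendsto_const_nhds (x := 3*Real.pi/2) (f := atTop)).sub (harc.const_mul 4)
    rw [harct] at hfinal
    have : 3*Real.pi/2 - 4*(3*Real.pi/8) = 0 := by ring
    rw [this] at hfinal
    exact hfinal
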